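/- Let Θ : ℂ → ℂ be an entire function satisfying Θ(z + π) = Θ(z) and Θ(z + πτ) = e^{-2inz} e^{-inπτ} Θ(z) for all z, where n is a positive integer and Im τ > 0. Then the complex vector space of such functions has dimension exactly n. -/

import Mathlib

noncomputable section

open Complex

/-- The space of entire functions `Θ` satisfying `Θ(z + π) = Θ(z)` and
`Θ(z + πτ) = e^{-2inz} e^{-inπτ} Θ(z)`. -/
def thetaSpace (n : ℕ) (τ : ℂ) : Submodule ℂ (ℂ → ℂ) where
  carrier := {Θ | Differentiable ℂ Θ ∧ (∀ z, Θ (z + Real.pi) = Θ z) ∧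
    (∀ z, Θ (z + Real.pi * τ) =
      Complex.exp (-2 * I * (n : ℂ) * z) * Complex.exp (-I * (n : ℂ) * Real.pi * τ) * Θ z)}
  add_mem' := by
    rintro a b ⟨ha1, ha2, ha3⟩ ⟨hb1, hb2, hb3⟩
    refine ⟨ha1.add hb1, fun z => ?_, fun z => ?_⟩
    · simp [Pi.add_apply, ha2 z, hb2 z]
    · simp only [Pi.add_apply, ha3 z, hb3 z]; ring
  zero_mem' := by
    refine ⟨differentiable_const 0, fun z => rfl, fun z => ?_⟩
    simp
  smul_mem' := by
    rintro c a ⟨ha1, ha2, ha3⟩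
    refine ⟨ha1.const_smul c, fun z => ?_, fun z => ?_⟩
    · simp [Pi.smul_apply, ha2 z]
    · simp only [Pi.smul_apply, ha3 z, smul_eq_mul]; ring

namespace ThetaDim

open MeasureTheory intervalIntegral Metric
open scoped Real Interval Topology

/-- The `k`-th Fourier coefficient integral of `Θ` along the horizontal segment
of length `π` starting at `w`. -/
def coefI (k : ℤ) (Θ : ℂ → ℂ) (w : ℂ) : ℂ :=
  ∫ t in (0:ℝ)..Real.pi, Θ (w + t) * cexp (-2 * I * k * (w + t))

/-- The basis theta functions, built from the two-variable Jacobi theta function. -/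
def tf (n : ℕ) (τ : ℂ) (k : ℕ) (z : ℂ) : ℂ :=
  cexp (2 * I * k * z) * jacobiTheta₂ ((n:ℂ) * z / (Real.pi:ℂ) + (k:ℂ) * τ) ((n:ℂ) * τ)

lemma integral_shift_const {g : ℂ → ℂ} (hg : Differentiable ℂ g)
    (hper : ∀ z, g (z + (Real.pi : ℂ)) = g z) (w : ℂ) :
    (∫ t in (0:ℝ)..Real.pi, g (w + t)) = ∫ t in (0:ℝ)..Real.pi, g ((0:ℂ) + t) := by
  have hgc : Continuous g := hg.continuous
  have hg'c : Continuous (deriv g) := (hg.contDiff (n := 1)).continuous_deriv le_rfl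
  have hinner : ∀ (x : ℂ) (c : ℂ), HasDerivAt (fun y : ℂ => g (c + y)) (deriv g (c + x)) x := by
    intro x c
    simpa [Function.comp_def] using
      ((hg (c + x)).hasDerivAt.comp x ((hasDerivAt_id x).const_add c))
  have hinner' : ∀ (x : ℂ) (c : ℂ), HasDerivAt (fun y : ℂ => g (y + c)) (deriv g (x + c)) x := by
    intro x c
    simpa [Function.comp_def] using
      ((hg (x + c)).hasDerivAt.comp x ((hasDerivAt_id x).add_const c))
  have hderiv : ∀ w : ℂ, HasDerivAt (fun w : ℂ => ∫ t in (0:ℝ)..Real.pi, g (w + t)) 0 w := by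
    intro w
    obtain ⟨M, hM⟩ : ∃ M, ∀ z ∈ Metric.closedBall w (1 + Real.pi), ‖deriv g z‖ ≤ M :=
      (isCompact_closedBall w (1 + Real.pi)).exists_bound_of_continuousOn hg'c.continuousOn
    have key : IntervalIntegrable (fun t : ℝ => deriv g (w + t)) volume 0 Real.pi ∧
        HasDerivAt (fun x : ℂ => ∫ t in (0:ℝ)..Real.pi, g (x + t))
          (∫ t in (0:ℝ)..Real.pi, deriv g (w + t)) w := by
      refine intervalIntegral.hasDerivAt_integral_of_dominated_loc_of_deriv_le
        (F := fun (x : ℂ) (t : ℝ) => g (x + t)) (F' := fun (x : ℂ) (t : ℝ) => deriv g (x + t))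
        (bound := fun _ => M) (s := Metric.ball w 1) (Metric.ball_mem_nhds w one_pos) ?_ ?_ ?_ ?_ ?_ ?_
      · exact Filter.Eventually.of_forall fun x =>
          ((hgc.comp (by continuity)).aestronglyMeasurable)
      · exact (hgc.comp (by continuity)).intervalIntegrable _ _
      · exact (hg'c.comp (by continuity)).aestronglyMeasurable
      · refine Filter.Eventually.of_forall fun t ht x hx => ?_
        apply hM
        rw [Metric.mem_closedBall]
        have h1 : dist (x + (t:ℂ)) w ≤ dist x w + |t| := by
          calc dist (x + (t:ℂ)) w ≤ dist (x + (t:ℂ)) x + dist x w := dist_triangle _ _ _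
          _ = ‖(t:ℂ)‖ + dist x w := by rw [dist_eq_norm]; ring_nf
          _ = |t| + dist x w := by rw [Complex.norm_real, Real.norm_eq_abs]
          _ = dist x w + |t| := by ring
        have ht2 : t ∈ Set.Ioc (0:ℝ) Real.pi := by
          rwa [Set.uIoc_of_le Real.pi_pos.le] at ht
        have ht' : |t| ≤ Real.pi := by
          rw [abs_le]; exact ⟨by linarith [ht2.1, Real.pi_pos], ht2.2⟩
        have hx' : dist x w ≤ 1 := le_of_lt (Metric.mem_ball.mp hx)
        linarith
      · exact intervalIntegrable_const
      · exact Filter.Eventually.of_forall fun t ht x hx => hinner' x t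
    have hval : (∫ t in (0:ℝ)..Real.pi, deriv g (w + t)) = 0 := by
      rw [intervalIntegral.integral_eq_sub_of_hasDerivAt
        (f := fun t : ℝ => g (w + t)) (f' := fun t : ℝ => deriv g (w + t))
        (fun t ht => (hinner (t:ℂ) w).comp_ofReal)
        ((hg'c.comp (by continuity)).intervalIntegrable _ _)]
      simp [hper w]
    rw [hval] at key
    exact key.2
  have hconst := is_const_of_deriv_eq_zero
    (f := fun w : ℂ => ∫ t in (0:ℝ)..Real.pi, g (w + t))
    (fun w => (hderiv w).differentiableAt) (fun w => (hderiv w).deriv) w 0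
  exact hconst

lemma coefI_const {Θ : ℂ → ℂ} (hΘ : Differentiable ℂ Θ)
    (hper : ∀ z, Θ (z + (Real.pi : ℂ)) = Θ z) (k : ℤ) (w : ℂ) :
    coefI k Θ w = coefI k Θ 0 := by
  have hg : Differentiable ℂ (fun z : ℂ => Θ z * cexp (-2 * I * k * z)) := by
    apply hΘ.mul
    apply Differentiable.cexp
    fun_prop
  have hgper : ∀ z : ℂ, Θ (z + (Real.pi:ℂ)) * cexp (-2 * I * k * (z + (Real.pi:ℂ)))
      = Θ z * cexp (-2 * I * k * z) := by
    intro z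
    rw [hper z]
    congr 1
    rw [show (-2 * I * (k:ℂ) * (z + (Real.pi:ℂ))) = -2 * I * k * z + (-k : ℤ) * (2 * (Real.pi:ℂ) * I) by
      push_cast; ring, Complex.exp_add, Complex.exp_int_mul_two_pi_mul_I, mul_one]
  exact integral_shift_const hg hgper w

lemma coefI_rec {n : ℕ} {τ : ℂ} {Θ : ℂ → ℂ} (hd : Differentiable ℂ Θ)
    (hper : ∀ z, Θ (z + (Real.pi : ℂ)) = Θ z)
    (hq : ∀ z, Θ (z + Real.pi * τ) =
      Complex.exp (-2 * I * (n : ℂ) * z) * Complex.exp (-I * (n : ℂ) * Real.pi * τ) * Θ z)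
    (k : ℤ) :
    coefI k Θ 0 = cexp (-I * (Real.pi:ℂ) * τ * (n + 2 * k)) * coefI (k + n) Θ 0 := by
  rw [← coefI_const hd hper k ((Real.pi:ℂ) * τ)]
  unfold coefI
  rw [← intervalIntegral.integral_const_mul]
  refine intervalIntegral.integral_congr fun t ht => ?_
  have h1 := hq (t : ℂ)
  rw [show ((Real.pi:ℂ) * τ + (t:ℂ)) = (t:ℂ) + (Real.pi:ℂ) * τ by ring, h1,
    show ((0:ℂ) + (t:ℂ)) = (t:ℂ) by ring]
  have hexp : cexp (-2 * I * (n:ℂ) * t) * cexp (-I * (n:ℂ) * (Real.pi:ℂ) * τ)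
      * cexp (-2 * I * (k:ℂ) * ((t:ℂ) + (Real.pi:ℂ) * τ))
      = cexp (-I * (Real.pi:ℂ) * τ * ((n:ℂ) + 2 * k)) * cexp (-2 * I * ((k:ℤ)+(n:ℕ) : ℤ) * (t:ℂ)) := by
    rw [← Complex.exp_add, ← Complex.exp_add, ← Complex.exp_add]
    congr 1
    push_cast
    ring
  linear_combination Θ (t:ℂ) * hexp

lemma coefI_all_zero {n : ℕ} (hn : 0 < n) {τ : ℂ} {Θ : ℂ → ℂ} (hd : Differentiable ℂ Θ)
    (hper : ∀ z, Θ (z + (Real.pi : ℂ)) = Θ z)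
    (hq : ∀ z, Θ (z + Real.pi * τ) =
      Complex.exp (-2 * I * (n : ℂ) * z) * Complex.exp (-I * (n : ℂ) * Real.pi * τ) * Θ z)
    (h0 : ∀ j : ℕ, j < n → coefI j Θ 0 = 0) : ∀ k : ℤ, coefI k Θ 0 = 0 := by
  have hrec := coefI_rec (n := n) (τ := τ) hd hper hq
  have step1 : ∀ k : ℤ, coefI k Θ 0 = 0 → coefI (k + n) Θ 0 = 0 := by
    intro k h
    have h2 := hrec k
    rw [h] at h2
    rcases mul_eq_zero.mp h2.symm with h3 | h3
    · exact absurd h3 (Complex.exp_ne_zero _)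
    · exact h3
  have step2 : ∀ k : ℤ, coefI (k + n) Θ 0 = 0 → coefI k Θ 0 = 0 := by
    intro k h
    rw [hrec k, h, mul_zero]
  have main : ∀ m : ℤ, ∀ j : ℕ, j < n → coefI ((j : ℤ) + n * m) Θ 0 = 0 := by
    intro m
    induction m using Int.induction_on with
    | zero => intro j hj; simpa using h0 j hj
    | succ m ih =>
      intro j hj
      have := step1 _ (ih j hj)
      rwa [show ((j:ℤ) + (n:ℤ) * m + (n:ℤ)) = (j:ℤ) + n * (m + 1) by ring] at this
    | pred m ih =>
      intro j hj
      apply step2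
      have := ih j hj
      rwa [show ((j:ℤ) + (n:ℤ) * (-m)) = ((j:ℤ) + n * (-m-1) + n) by ring] at this
  intro k
  have hmod1 : 0 ≤ k % (n:ℤ) := Int.emod_nonneg k (by exact_mod_cast hn.ne')
  have hmod2 : k % (n:ℤ) < (n:ℤ) := Int.emod_lt_of_pos k (by exact_mod_cast hn)
  have h1 : ((k % (n:ℤ)).toNat : ℤ) = k % (n:ℤ) := Int.toNat_of_nonneg hmod1
  have h2 : (k % (n:ℤ)).toNat < n := by omega
  have := main (k / n) (k % (n:ℤ)).toNat h2
  rwa [h1, Int.emod_add_mul_ediv k n] at this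

lemma eq_zero_of_coefI_zero {Θ : ℂ → ℂ} (hd : Differentiable ℂ Θ)
    (hper : ∀ z, Θ (z + (Real.pi : ℂ)) = Θ z)
    (h : ∀ k : ℤ, coefI k Θ 0 = 0) : Θ = 0 := by
  haveI : Fact (0 < Real.pi) := ⟨Real.pi_pos⟩
  set f : ℝ → ℂ := fun t => Θ t with hf
  have hfper : Function.Periodic f Real.pi := by
    intro t
    simp only [f, Complex.ofReal_add]
    exact hper t
  have hfc : Continuous f := hd.continuous.comp Complex.continuous_ofReal
  set F : AddCircle Real.pi → ℂ := hfper.lift with hF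
  have hFc : Continuous F := by
    rw [hF]
    exact continuous_coinduced_dom.mpr hfc
  have hFcoef : ∀ k : ℤ, fourierCoeff F k = 0 := by
    intro k
    rw [fourierCoeff_eq_intervalIntegral F k 0]
    have : (∫ x in (0:ℝ)..(0 + Real.pi), (fourier (-k) (x : AddCircle Real.pi) : ℂ) • F x)
        = coefI k Θ 0 := by
      rw [zero_add]
      refine intervalIntegral.integral_congr fun t ht => ?_
      have h1 : F ((t : ℝ) : AddCircle Real.pi) = f t := hfper.lift_coe t
      rw [h1]
      rw [fourier_coe_apply]
      have hπ : ((Real.pi : ℂ)) ≠ 0 := Complex.ofReal_ne_zero.mpr Real.pi_ne_zero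
      have : (2 * (Real.pi:ℂ) * Complex.I * (-k : ℤ) * (t:ℝ) / (Real.pi:ℂ))
          = -2 * I * k * ((0:ℂ) + t) := by
        field_simp
        push_cast
        ring
      rw [this]
      simp only [smul_eq_mul, f]
      rw [show ((0:ℂ) + (t:ℂ)) = (t:ℂ) by ring]
      ring
    rw [this, h k, smul_zero]
  have hsummable : Summable (fourierCoeff F) := by
    have : fourierCoeff F = fun _ => 0 := funext hFcoef
    rw [this]; exact summable_zero
  have hFzero : ∀ x, F x = 0 := by
    intro x
    have hp := has_pointwise_sum_fourier_series_of_summable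
      (f := ⟨F, hFc⟩) (by exact hsummable) x
    simp only [ContinuousMap.coe_mk] at hp
    simp only [hFcoef, zero_smul] at hp
    simpa using (hasSum_zero.unique hp).symm
  have hreal : ∀ t : ℝ, Θ t = 0 := fun t => by
    have h3 := hFzero ((t : ℝ) : AddCircle Real.pi)
    rw [hF] at h3
    rwa [hfper.lift_coe t] at h3
  have han : AnalyticOnNhd ℂ Θ Set.univ := fun z _ => hd.analyticAt z
  have hfreq : ∃ᶠ z in nhdsWithin (0:ℂ) {(0:ℂ)}ᶜ, Θ z = 0 := by
    have htend : Filter.Tendsto (fun m : ℕ => ((1 / (m + 1) : ℝ) : ℂ)) Filter.atTop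
        (nhdsWithin (0:ℂ) {(0:ℂ)}ᶜ) := by
      apply tendsto_nhdsWithin_of_tendsto_nhds_of_eventually_within
      · have : Filter.Tendsto (fun m : ℕ => (1 / (m + 1) : ℝ)) Filter.atTop (nhds 0) :=
          tendsto_one_div_add_atTop_nhds_zero_nat
        have h2 := (Complex.continuous_ofReal.tendsto 0).comp this
        simpa [Function.comp_def, one_div] using h2
      · refine Filter.Eventually.of_forall fun m => ?_
        simp only [Set.mem_compl_iff, Set.mem_singleton_iff]
        intro hcon
        have : (1 / (m + 1 : ℝ)) = 0 := by exact_mod_cast hcon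
        have : (0:ℝ) < 1 / (m + 1) := by positivity
        simp_all
    exact htend.frequently (Filter.Eventually.of_forall fun m => hreal _).frequently
  have := han.eqOn_zero_of_preconnected_of_frequently_eq_zero
    isPreconnected_univ (Set.mem_univ (0:ℂ)) hfreq
  funext z
  exact this (Set.mem_univ z)

lemma jacobiTheta₂_add_nat (w τ' : ℂ) (m : ℕ) :
    jacobiTheta₂ (w + (m:ℂ)) τ' = jacobiTheta₂ w τ' := by
  induction m with
  | zero => simp
  | succ m ih =>
    rw [show (w + ((m+1 : ℕ):ℂ)) = (w + (m:ℂ)) + 1 by push_cast; ring,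
      jacobiTheta₂_add_left, ih]

variable {n : ℕ} {τ : ℂ}

lemma him (hn : 0 < n) (hτ : 0 < τ.im) : 0 < ((n:ℂ) * τ).im := by
  simp only [Complex.mul_im, Complex.natCast_re, Complex.natCast_im, zero_mul, add_zero]
  exact mul_pos (by exact_mod_cast hn) hτ

lemma tf_diff (hn : 0 < n) (hτ : 0 < τ.im) (k : ℕ) : Differentiable ℂ (tf n τ k) := by
  apply Differentiable.mul
  · apply Differentiable.cexp; fun_prop
  · intro z
    have h1 : DifferentiableAt ℂ (fun w : ℂ => jacobiTheta₂ w ((n:ℂ) * τ))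
        ((n:ℂ) * z / (Real.pi:ℂ) + (k:ℂ) * τ) :=
      differentiableAt_jacobiTheta₂_fst _ (him hn hτ)
    exact h1.comp (f := fun z : ℂ => (n:ℂ) * z / (Real.pi:ℂ) + (k:ℂ) * τ) (x := z) (by fun_prop)

lemma tf_per (k : ℕ) (z : ℂ) : tf n τ k (z + (Real.pi:ℂ)) = tf n τ k z := by
  have hπ : ((Real.pi : ℂ)) ≠ 0 := Complex.ofReal_ne_zero.mpr Real.pi_ne_zero
  unfold tf
  have h1 : (n:ℂ) * (z + (Real.pi:ℂ)) / (Real.pi:ℂ) + (k:ℂ) * τ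
      = ((n:ℂ) * z / (Real.pi:ℂ) + (k:ℂ) * τ) + (n:ℂ) := by field_simp; ring
  rw [h1, jacobiTheta₂_add_nat]
  congr 1
  rw [show (2 * I * (k:ℂ) * (z + (Real.pi:ℂ))) = 2 * I * k * z + (k:ℤ) * (2 * (Real.pi:ℂ) * I) by
    push_cast; ring, Complex.exp_add, Complex.exp_int_mul_two_pi_mul_I, mul_one]

lemma tf_quasi (k : ℕ) (z : ℂ) :
    tf n τ k (z + (Real.pi:ℂ) * τ) =
      cexp (-2 * I * (n : ℂ) * z) * cexp (-I * (n : ℂ) * (Real.pi:ℂ) * τ) * tf n τ k z := by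
  have hπ : ((Real.pi : ℂ)) ≠ 0 := Complex.ofReal_ne_zero.mpr Real.pi_ne_zero
  unfold tf
  have h1 : (n:ℂ) * (z + (Real.pi:ℂ) * τ) / (Real.pi:ℂ) + (k:ℂ) * τ
      = ((n:ℂ) * z / (Real.pi:ℂ) + (k:ℂ) * τ) + (n:ℂ) * τ := by field_simp; ring
  rw [h1, jacobiTheta₂_add_left']
  have hexp : cexp (2 * I * (k:ℂ) * (z + (Real.pi:ℂ) * τ)) *
      cexp (-(Real.pi:ℂ) * I * ((n:ℂ) * τ + 2 * ((n:ℂ) * z / (Real.pi:ℂ) + (k:ℂ) * τ)))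
      = cexp (-2 * I * (n : ℂ) * z) * cexp (-I * (n : ℂ) * (Real.pi:ℂ) * τ)
        * cexp (2 * I * (k:ℂ) * z) := by
    rw [← Complex.exp_add, ← Complex.exp_add, ← Complex.exp_add]
    congr 1
    field_simp
    ring
  linear_combination jacobiTheta₂ ((n:ℂ) * z / (Real.pi:ℂ) + (k:ℂ) * τ) ((n:ℂ) * τ) * hexp

lemma tf_mem (hn : 0 < n) (hτ : 0 < τ.im) (k : ℕ) : tf n τ k ∈ thetaSpace n τ :=
  ⟨tf_diff hn hτ k, fun z => tf_per k z, fun z => tf_quasi k z⟩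

lemma coefI_tf (hn : 0 < n) (hτ : 0 < τ.im) {j k : ℕ} (hj : j < n) (hk : k < n) :
    coefI (j : ℤ) (tf n τ k) 0 = if j = k then ((Real.pi : ℂ)) else 0 := by
  have hπ : ((Real.pi : ℂ)) ≠ 0 := Complex.ofReal_ne_zero.mpr Real.pi_ne_zero
  set F : ℤ → ℝ → ℂ := fun m t =>
    jacobiTheta₂_term m ((k:ℂ)*τ) ((n:ℂ)*τ) * cexp (2 * I * (((n:ℤ)*m + k - j : ℤ) : ℂ) * t)
    with hFdef
  have hptsum : ∀ t : ℝ, HasSum (fun m => F m t)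
      (tf n τ k (0 + (t:ℂ)) * cexp (-2 * I * ((j:ℤ) : ℂ) * (0 + (t:ℂ)))) := by
    intro t
    have hs := hasSum_jacobiTheta₂_term ((n:ℂ) * (t:ℂ) / (Real.pi:ℂ) + (k:ℂ) * τ) (him hn hτ)
    have hs2 := hs.mul_left (cexp (2 * I * (k:ℂ) * (t:ℂ)) * cexp (-2 * I * ((j:ℤ):ℂ) * (t:ℂ)))
    have heq : ∀ m : ℤ, (cexp (2 * I * (k:ℂ) * (t:ℂ)) * cexp (-2 * I * ((j:ℤ):ℂ) * (t:ℂ)))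
        * jacobiTheta₂_term m ((n:ℂ) * (t:ℂ) / (Real.pi:ℂ) + (k:ℂ) * τ) ((n:ℂ)*τ) = F m t := by
      intro m
      rw [hFdef]
      simp only [jacobiTheta₂_term]
      rw [← Complex.exp_add, ← Complex.exp_add, ← Complex.exp_add]
      congr 1
      push_cast
      field_simp
      ring
    rw [funext heq] at hs2
    convert hs2 using 1
    · rfl
    rw [show ((0:ℂ) + (t:ℂ)) = (t:ℂ) by ring]
    unfold tf
    push_cast
    ring
  have hterm : ∀ m : ℤ, (∫ t in (0:ℝ)..Real.pi, F m t)
      = jacobiTheta₂_term m ((k:ℂ)*τ) ((n:ℂ)*τ) *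
        (if ((n:ℤ)*m + k - j : ℤ) = 0 then ((Real.pi:ℂ)) else 0) := by
    intro m
    rw [hFdef]
    simp only []
    rw [intervalIntegral.integral_const_mul]
    congr 1
    by_cases hℓ : ((n:ℤ)*m + k - j : ℤ) = 0
    · rw [hℓ]
      simp only [Int.cast_zero, mul_zero, zero_mul, Complex.exp_zero]
      rw [intervalIntegral.integral_const]
      simp [hℓ]
    · have hc : (2 * I * (((n:ℤ)*m + k - j : ℤ) : ℂ)) ≠ 0 := by
        simp only [ne_eq, mul_eq_zero, OfNat.ofNat_ne_zero, I_ne_zero, false_or]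
        exact_mod_cast hℓ
      rw [integral_exp_mul_complex hc]
      rw [if_neg hℓ]
      have h1 : cexp (2 * I * (((n:ℤ)*m + k - j : ℤ) : ℂ) * (Real.pi:ℝ)) = 1 := by
        rw [show (2 * I * (((n:ℤ)*m + k - j : ℤ) : ℂ) * ((Real.pi:ℝ):ℂ))
            = (((n:ℤ)*m + k - j : ℤ) : ℂ) * (2 * (Real.pi:ℂ) * I) by push_cast; ring]
        exact Complex.exp_int_mul_two_pi_mul_I _
      rw [h1]
      simp
  have hsummable : Summable (fun m : ℤ => ‖jacobiTheta₂_term m ((k:ℂ)*τ) ((n:ℂ)*τ)‖) :=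
    summable_norm_iff.mpr ((summable_jacobiTheta₂_term_iff _ _).mpr (him hn hτ))
  have hnorm : ∀ (m : ℤ) (t : ℝ), ‖F m t‖ = ‖jacobiTheta₂_term m ((k:ℂ)*τ) ((n:ℂ)*τ)‖ := by
    intro m t
    rw [hFdef]
    simp only [norm_mul]
    have : (2 * I * (((n:ℤ)*m + k - j : ℤ) : ℂ) * (t:ℝ))
        = ((2 * ((n:ℤ)*m + k - j : ℤ) * t : ℝ) : ℂ) * I := by push_cast; ring
    rw [this]
    rw [Complex.norm_exp_ofReal_mul_I, mul_one]
  have hswap : (∫ t in (0:ℝ)..Real.pi, tf n τ k (0 + (t:ℂ)) * cexp (-2 * I * ((j:ℤ):ℂ) * (0 + (t:ℂ))))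
      = ∑' m : ℤ, ∫ t in (0:ℝ)..Real.pi, F m t := by
    have hle : (0:ℝ) ≤ Real.pi := Real.pi_pos.le
    rw [intervalIntegral.integral_of_le hle]
    have hint : ∀ m : ℤ, Integrable (F m) (volume.restrict (Set.Ioc (0:ℝ) Real.pi)) := by
      intro m
      apply Continuous.integrableOn_Ioc
      rw [hFdef]
      apply Continuous.mul continuous_const
      apply Continuous.cexp
      fun_prop
    have hsum2 : Summable (fun m : ℤ => ∫ t in Set.Ioc (0:ℝ) Real.pi, ‖F m t‖) := by
      have : (fun m : ℤ => ∫ t in Set.Ioc (0:ℝ) Real.pi, ‖F m t‖)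
          = fun m : ℤ => Real.pi * ‖jacobiTheta₂_term m ((k:ℂ)*τ) ((n:ℂ)*τ)‖ := by
        funext m
        simp_rw [hnorm m]
        rw [setIntegral_const]
        simp [Real.volume_Ioc, Real.pi_pos.le]
      rw [this]
      exact hsummable.mul_left _
    have hswap0 := MeasureTheory.integral_tsum_of_summable_integral_norm hint hsum2
    have hcong : ∀ t : ℝ, tf n τ k (0 + (t:ℂ)) * cexp (-2 * I * ((j:ℤ):ℂ) * (0 + (t:ℂ)))
        = ∑' m, F m t := fun t => ((hptsum t).tsum_eq).symm
    simp_rw [hcong]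
    rw [← hswap0]
    exact tsum_congr fun m => (intervalIntegral.integral_of_le hle).symm
  unfold coefI
  rw [show (∫ t in (0:ℝ)..Real.pi, tf n τ k (0 + (t:ℂ)) * cexp (-2 * I * (((j:ℕ):ℤ):ℂ) * (0 + (t:ℂ))))
      = ∑' m : ℤ, ∫ t in (0:ℝ)..Real.pi, F m t from hswap]
  · rw [funext hterm]
    by_cases hjk : j = k
    · subst hjk
      rw [if_pos rfl]
      rw [tsum_eq_single (0:ℤ)]
      · simp [jacobiTheta₂_term]
      · intro m hm
        rw [if_neg, mul_zero]
        intro hcon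
        have : (n:ℤ) * m = 0 := by omega
        rcases mul_eq_zero.mp this with h | h
        · exact absurd h (by exact_mod_cast hn.ne')
        · exact hm h
    · rw [if_neg hjk]
      convert tsum_zero with m
      rw [if_neg, mul_zero]
      intro hcon
      have hdvd : (n:ℤ) ∣ ((j:ℤ) - k) := ⟨m, by linarith [hcon]⟩
      have hne : ((j:ℤ) - k) ≠ 0 := by
        intro h; exact hjk (by omega)
      have hlt : ((j:ℤ) - k).natAbs < ((n:ℤ)).natAbs := by
        simp only [Int.natAbs_natCast]
        omega
      exact hne (Int.eq_zero_of_dvd_of_natAbs_lt_natAbs hdvd hlt)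

lemma coefI_add {k : ℤ} {Θ Ψ : ℂ → ℂ} (hΘ : Continuous Θ) (hΨ : Continuous Ψ) (w : ℂ) :
    coefI k (Θ + Ψ) w = coefI k Θ w + coefI k Ψ w := by
  unfold coefI
  rw [← intervalIntegral.integral_add]
  · exact intervalIntegral.integral_congr fun t ht => by
      simp only [Pi.add_apply]; ring
  · exact ((hΘ.comp (by continuity)).mul (by fun_prop)).intervalIntegrable _ _
  · exact ((hΨ.comp (by continuity)).mul (by fun_prop)).intervalIntegrable _ _

lemma coefI_smul {k : ℤ} {Θ : ℂ → ℂ} (c : ℂ) (w : ℂ) :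
    coefI k (c • Θ) w = c * coefI k Θ w := by
  unfold coefI
  rw [← intervalIntegral.integral_const_mul]
  exact intervalIntegral.integral_congr fun t ht => by
    simp only [Pi.smul_apply, smul_eq_mul]; ring

/-- The linear map sending `Θ` to its first `n` Fourier coefficients. -/
def Φ (n : ℕ) (τ : ℂ) : thetaSpace n τ →ₗ[ℂ] (Fin n → ℂ) where
  toFun Θ := fun j => coefI ((j : ℕ) : ℤ) Θ.1 0
  map_add' := fun Θ Ψ => by
    obtain ⟨hd1, -, -⟩ := Θ.2
    obtain ⟨hd2, -, -⟩ := Ψ.2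
    funext j
    exact coefI_add hd1.continuous hd2.continuous 0
  map_smul' := fun c Θ => by
    funext j
    simpa using coefI_smul (k := ((j:ℕ):ℤ)) (Θ := Θ.1) c 0

lemma Φ_injective (hn : 0 < n) (hτ : 0 < τ.im) : Function.Injective (Φ n τ) := by
  rw [injective_iff_map_eq_zero]
  intro Θ hΦ
  obtain ⟨hd, hp, hq⟩ := Θ.2
  have h0 : ∀ j : ℕ, j < n → coefI (j : ℤ) Θ.1 0 = 0 := by
    intro j hj
    exact congrFun hΦ ⟨j, hj⟩
  have hall := coefI_all_zero hn hd hp hq h0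
  have : Θ.1 = 0 := eq_zero_of_coefI_zero hd hp hall
  exact Subtype.ext this

lemma Φ_surjective (hn : 0 < n) (hτ : 0 < τ.im) : Function.Surjective (Φ n τ) := by
  intro v
  refine ⟨∑ j : Fin n, (v j * ((Real.pi:ℝ):ℂ)⁻¹) • (⟨tf n τ (j:ℕ), tf_mem hn hτ (j:ℕ)⟩ : thetaSpace n τ), ?_⟩
  have hπ : ((Real.pi : ℂ)) ≠ 0 := Complex.ofReal_ne_zero.mpr Real.pi_ne_zero
  funext i
  rw [map_sum]
  simp only [_root_.map_smul]
  rw [Finset.sum_apply]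
  simp only [Pi.smul_apply, smul_eq_mul]
  have hΦval : ∀ j : Fin n, (Φ n τ) ⟨tf n τ (j:ℕ), tf_mem hn hτ (j:ℕ)⟩ i
      = if (i:ℕ) = (j:ℕ) then ((Real.pi : ℂ)) else 0 := by
    intro j
    show coefI ((i:ℕ) : ℤ) (tf n τ (j:ℕ)) 0 = _
    exact coefI_tf hn hτ i.2 j.2
  have hterm : ∀ j : Fin n, v j * ((Real.pi:ℝ):ℂ)⁻¹ * ((Φ n τ) ⟨tf n τ (j:ℕ), tf_mem hn hτ (j:ℕ)⟩ i)
      = if j = i then v i else 0 := by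
    intro j
    rw [hΦval j]
    by_cases h : j = i
    · subst h
      rw [if_pos rfl, if_pos rfl]
      field_simp
    · rw [if_neg (fun hc => h (Fin.ext hc.symm)), if_neg h, mul_zero]
  have hsum := Finset.sum_congr rfl (fun j (_ : j ∈ Finset.univ) => hterm j)
  rw [hsum]
  simp

end ThetaDim

/-- The space of entire functions with the theta quasi-periodicity relations has
complex dimension exactly `n`. -/
theorem thetaSpace_finrank (n : ℕ) (hn : 0 < n) (τ : ℂ) (hτ : 0 < τ.im) :
    Module.finrank ℂ (thetaSpace n τ) = n := by
  have e := LinearEquiv.ofBijective (ThetaDim.Φ n τ)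
    ⟨ThetaDim.Φ_injective hn hτ, ThetaDim.Φ_surjective hn hτ⟩
  rw [e.finrank_eq, Module.finrank_fin_fun]
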